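/- (Upper semicontinuity of the type; the semicontinuity claim of Section 2.2 of the paper, pointwise form.) Let X be a topological space and J : X → End(W) a continuous map such that J_x is bijective for every x ∈ X (for instance, J_x² = −Id for every x). Then the function x ↦ dim_ℝ(V* ∩ J_x(V*)) is upper semicontinuous on X. -/

import Mathlib

noncomputable section

open Module

/-- The subspace `V* = {0} × V*` of `W = V × V*` (with `V*` the topological dual). -/
def dualSub (V : Type*) [NormedAddCommGroup V] [NormedSpace ℝ V] :
    Submodule ℝ (V × StrongDual ℝ V) :=
  (⊥ : Submodule ℝ V).prod (⊤ : Submodule ℝ (StrongDual ℝ V))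

lemma dualSub_eq_range (V : Type*) [NormedAddCommGroup V] [NormedSpace ℝ V] :
    dualSub V = LinearMap.range (LinearMap.inr ℝ V (StrongDual ℝ V)) := by
  ext ⟨a, b⟩
  simp [dualSub, eq_comm, Prod.ext_iff]

/-- Upper semicontinuity of the type: if `J : X → End(W)` is continuous with bijective values,
then `x ↦ dim (V* ∩ J_x(V*))` is upper semicontinuous. -/
theorem type_upperSemicontinuous
    {V : Type*} [NormedAddCommGroup V] [NormedSpace ℝ V] [FiniteDimensional ℝ V]
    {X : Type*} [TopologicalSpace X]
    (J : X → ((V × StrongDual ℝ V) →L[ℝ] (V × StrongDual ℝ V)))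
    (hJ : Continuous J)
    (hbij : ∀ x, Function.Bijective (J x)) :
    UpperSemicontinuous (fun x : X =>
      (finrank ℝ
        ↥(dualSub V ⊓ (dualSub V).map ((J x : (V × StrongDual ℝ V) →ₗ[ℝ]
          (V × StrongDual ℝ V)))) : ℕ)) := by
  set D := StrongDual ℝ V
  set W := V × D
  set s : Submodule ℝ W := dualSub V with hs
  set t : X → Submodule ℝ W := fun x => s.map ((J x : W →ₗ[ℝ] W)) with ht
  -- the coprod map whose range is s ⊔ t x
  set L : X → (D × D) →ₗ[ℝ] W := fun x =>
    (LinearMap.inr ℝ V D).coprod (((J x : W →ₗ[ℝ] W)).comp (LinearMap.inr ℝ V D)) with hL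
  have hrange : ∀ x, LinearMap.range (L x) = s ⊔ t x := by
    intro x
    rw [hL]
    simp only [LinearMap.range_coprod, LinearMap.range_comp]
    rw [← dualSub_eq_range V]
  have htd : ∀ x, finrank ℝ (t x) = finrank ℝ s := by
    intro x
    exact (LinearEquiv.finrank_eq
      (Submodule.equivMapOfInjective ((J x : W →ₗ[ℝ] W)) (hbij x).injective s)).symm
  -- key: lower semicontinuity of the rank of L
  have key : ∀ x₀ : X, ∀ᶠ x in nhds x₀,
      finrank ℝ (LinearMap.range (L x₀)) ≤ finrank ℝ (LinearMap.range (L x)) := by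
    intro x₀
    set r := finrank ℝ (LinearMap.range (L x₀)) with hr
    have b : Basis (Fin r) ℝ (LinearMap.range (L x₀)) :=
      haveI := Module.Free.of_divisionRing ℝ (LinearMap.range (L x₀)); finBasis ℝ _
    have he : ∀ i, ∃ e : D × D, L x₀ e = (b i : W) := fun i => (b i).2
    choose e he using he
    -- the family F x
    set F : X → Fin r → W := fun x i => L x (e i) with hF
    have hFcont : Continuous F := by
      apply continuous_pi
      intro i
      have : (fun x => F x i) = fun x => (0, (e i).1) + (J x) (0, (e i).2) := by
        funext x
        simp [hF, hL, LinearMap.coprod_apply]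
      rw [this]
      exact continuous_const.add (hJ.clm_apply continuous_const)
    have hFx₀ : LinearIndependent ℝ (F x₀) := by
      have : F x₀ = fun i => ((LinearMap.range (L x₀)).subtype (b i)) := by
        funext i; simp [hF, he]
      rw [this]
      exact b.linearIndependent.map_injOn _ Subtype.val_injective.injOn
    have hopen : IsOpen {f : Fin r → W | LinearIndependent ℝ f} :=
      isOpen_setOf_linearIndependent
    have hev : ∀ᶠ x in nhds x₀, LinearIndependent ℝ (F x) :=
      hFcont.continuousAt.eventually_mem (hopen.mem_nhds hFx₀)
    filter_upwards [hev] with x hx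
    have hspan : Submodule.span ℝ (Set.range (F x)) ≤ LinearMap.range (L x) := by
      rw [Submodule.span_le]
      rintro _ ⟨i, rfl⟩
      exact ⟨e i, rfl⟩
    calc r = finrank ℝ (Submodule.span ℝ (Set.range (F x))) := by
            rw [finrank_span_eq_card hx, Fintype.card_fin]
      _ ≤ finrank ℝ (LinearMap.range (L x)) := Submodule.finrank_mono hspan
  -- conclude
  intro x₀ y hy
  filter_upwards [key x₀] with x hx
  have h1 := Submodule.finrank_sup_add_finrank_inf_eq s (t x)
  have h2 := Submodule.finrank_sup_add_finrank_inf_eq s (t x₀)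
  rw [← hrange x] at h1
  rw [← hrange x₀] at h2
  have e1 := htd x
  have e2 := htd x₀
  have hy' : (finrank ℝ ↥(s ⊓ t x₀) : ℕ) < y := hy
  show (finrank ℝ ↥(s ⊓ t x) : ℕ) < y
  omega
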